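/- Let ρ1 ∈ (0,1) and ρ2 ∈ (0,1−ρ1). Then the matrices A and C satisfy A·C = C·Aᵀ. -/
import Mathlib


open Matrix

/-- The Jacobian of the average current of the two-species TASEP. -/
def matA (ρ1 ρ2 : ℝ) : Matrix (Fin 2) (Fin 2) ℝ :=
  !![1 - 2*ρ1, 0; -2*ρ2, 1 - 2*(ρ1 + ρ2)]

/-- The susceptibility matrix of the two-species TASEP. -/
def matC (ρ1 ρ2 : ℝ) : Matrix (Fin 2) (Fin 2) ℝ :=
  !![ρ1*(1 - ρ1), -(ρ1*(1 - ρ1));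
     -(ρ1*(1 - ρ1)), ρ2*(1 - ρ2) + 2*ρ1*(1 - ρ1) - 2*ρ1*ρ2]

lemma my_transpose_fin_two (a b c d : ℝ) : (!![a, b; c, d])ᵀ = !![a, c; b, d] := by
  ext i j
  fin_cases i <;> fin_cases j <;> rfl

/-- The identity A·C = C·Aᵀ for the two-species TASEP. -/
theorem matA_mul_matC_eq_matC_mul_matA_transpose
    (ρ1 ρ2 : ℝ) (h1 : ρ1 ∈ Set.Ioo (0:ℝ) 1) (h2 : ρ2 ∈ Set.Ioo (0:ℝ) (1 - ρ1)) :
    matA ρ1 ρ2 * matC ρ1 ρ2 = matC ρ1 ρ2 * (matA ρ1 ρ2)ᵀ := by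
  simp only [matA, matC, my_transpose_fin_two]
  ext i j
  fin_cases i <;> fin_cases j <;> simp [Matrix.mul_apply, Fin.sum_univ_two] <;> ring
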